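/- Suppose π is a fixed-point-free involution of the index set {1,…,n}, and let τ be the least positive integer such that U^τ (V e_u) = V e_{π(u)} for every u (assuming such τ exists). Then τ ≤ (1/2)·(8·(min(n,f))²)!. -/

import Mathlib

open Matrix Polynomial

private lemma aux_tot_strong (d : ℕ) :
    (Odd d → d ≤ d.totient ^ 2) ∧ (Even d → d ≤ 2 * d.totient ^ 2) := by
  induction d using Nat.recOnPosPrimePosCoprime with
  | prime_pow p nexp hp hn =>
      have hpp : p.Prime := hp
      have hp2 : 2 ≤ p := hpp.two_le
      rw [Nat.totient_prime_pow hpp hn]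
      rcases eq_or_ne p 2 with rfl | hodd
      · constructor
        · intro hoddp
          exfalso
          have : Even (2 ^ nexp) := (Nat.even_pow).mpr ⟨even_two, hn.ne'⟩
          exact (Nat.not_odd_iff_even.mpr this) hoddp
        · intro _
          rcases Nat.exists_eq_add_of_le hn with ⟨j, rfl⟩
          simp only [Nat.add_sub_cancel_left]
          have : 2 ^ (1 + j) ≤ 2 ^ (1 + j * 2) := by
            apply Nat.pow_le_pow_right <;> omega
          calc 2 ^ (1 + j) ≤ 2 ^ (1 + j * 2) := this
            _ = 2 * (2 ^ j) ^ 2 := by rw [← pow_mul, pow_add, pow_one]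
            _ ≤ 2 * (2 ^ j * (2 - 1)) ^ 2 := by norm_num
      · have hp3 : 3 ≤ p := by omega
        have key : p ^ nexp ≤ (p ^ (nexp - 1) * (p - 1)) ^ 2 := by
          rcases Nat.exists_eq_add_of_le hn with ⟨j, rfl⟩
          simp only [Nat.add_sub_cancel_left]
          have h1 : p ≤ (p - 1) ^ 2 := by
            obtain ⟨q, rfl⟩ : ∃ q, p = q + 2 := ⟨p - 2, by omega⟩
            have hq : 1 ≤ q := by omega
            have he : q + 2 - 1 = q + 1 := by omega
            have h2 : 2 * (q + 1) ≤ (q + 1) * (q + 1) := Nat.mul_le_mul_right _ (by omega)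
            rw [he, pow_two]
            omega
          have h2 : p ^ j ≤ (p ^ j) ^ 2 := Nat.le_self_pow (by norm_num) _
          calc p ^ (1 + j) = p ^ j * p := by rw [pow_add, pow_one, mul_comm]
            _ ≤ (p ^ j) ^ 2 * (p - 1) ^ 2 := Nat.mul_le_mul h2 h1
            _ = (p ^ j * (p - 1)) ^ 2 := by rw [mul_pow]
        exact ⟨fun _ => key, fun _ => le_trans key (by omega)⟩
  | zero => simp
  | one => simp
  | coprime a b ha hb hab iha ihb =>
      rw [Nat.totient_mul hab, mul_pow]
      have hta : 0 < a.totient := Nat.totient_pos.mpr (by omega)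
      have has : 0 < a.totient ^ 2 := by positivity
      have htb : 0 < b.totient := Nat.totient_pos.mpr (by omega)
      have hbs : 0 < b.totient ^ 2 := by positivity
      constructor
      · intro hodd
        rw [Nat.odd_mul] at hodd
        exact Nat.mul_le_mul (iha.1 hodd.1) (ihb.1 hodd.2)
      · intro _
        rcases Nat.even_or_odd a with hae | hao
        · have hbo : Odd b := by
            rcases Nat.even_or_odd b with hbe | hbo
            · exfalso
              have h2g : (2:ℕ) ∣ Nat.gcd a b := Nat.dvd_gcd hae.two_dvd hbe.two_dvd
              rw [hab] at h2g
              omega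
            · exact hbo
          calc a * b ≤ (2 * a.totient ^ 2) * (b.totient ^ 2) :=
                Nat.mul_le_mul (iha.2 hae) (ihb.1 hbo)
            _ = 2 * (a.totient ^ 2 * b.totient ^ 2) := by ring
        · rcases Nat.even_or_odd b with hbe | hbo
          · calc a * b ≤ (a.totient ^ 2) * (2 * b.totient ^ 2) :=
                Nat.mul_le_mul (iha.1 hao) (ihb.2 hbe)
              _ = 2 * (a.totient ^ 2 * b.totient ^ 2) := by ring
          · have : a * b ≤ a.totient ^ 2 * b.totient ^ 2 :=
              Nat.mul_le_mul (iha.1 hao) (ihb.1 hbo)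
            omega

private lemma aux_totient_sq (d : ℕ) : d ≤ 2 * d.totient ^ 2 := by
  rcases Nat.even_or_odd d with he | ho
  · exact (aux_tot_strong d).2 he
  · exact le_trans ((aux_tot_strong d).1 ho) (by omega)

private lemma aux_gcd_closed {P : ℕ → Prop} (h0 : P 0)
    (hsum : ∀ a b, P a → P b → P (a + b))
    (hdiff : ∀ a b, P (a + b) → P a → P b) :
    ∀ a b, P a → P b → P (Nat.gcd a b) := by
  have hmul : ∀ c a, P a → P (a * c) := by
    intro c
    induction c with
    | zero => intro a _; simpa using h0
    | succ c ih =>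
        intro a ha
        have := hsum (a * c) a (ih a ha) ha
        simpa [Nat.mul_succ] using this
  intro a
  induction a using Nat.strong_induction_on with
  | _ a IH =>
      intro b ha hb
      rcases Nat.eq_zero_or_pos a with rfl | hapos
      · simpa using hb
      · rw [Nat.gcd_rec a b]
        apply IH (b % a) (Nat.mod_lt _ hapos) a _ ha
        have hPdiv : P (a * (b / a)) := hmul _ _ ha
        have : b = a * (b / a) + b % a := (Nat.div_add_mod b a).symm
        exact hdiff (a * (b / a)) (b % a) (this ▸ hb) hPdiv

private lemma aux_cyclo (m τ : ℕ) (hτ : 0 < τ) (hm : 0 < m) (hq q0 : ℚ[X]) (e : ℕ)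
    (hfac : hq = (X + 1)^e * q0) (hq0 : q0 ≠ 0) (hdeg : q0.natDegree ≤ 2*m) :
    ∃ A B : ℚ[X], X^((8*m^2).factorial) - 1 = A * (X^(2*τ) - 1) + B * hq := by
  classical
  set F : ℕ := (8*m^2).factorial with hFdef
  have hFpos : 0 < F := Nat.factorial_pos _
  have h8m : 2 ≤ 8*m^2 := by nlinarith
  have h2F : 2 ∣ F := Nat.dvd_factorial (by norm_num) h8m
  have h2τ : 0 < 2*τ := by omega
  have hkey : ∀ d ∈ (2*τ).divisors.filter (fun d => ¬ d ∣ F),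
      IsCoprime (cyclotomic d ℚ) hq := by
    intro d hd
    rw [Finset.mem_filter, Nat.mem_divisors] at hd
    obtain ⟨⟨hdvd, _⟩, hndvd⟩ := hd
    have hdpos : 0 < d := Nat.pos_of_dvd_of_pos hdvd h2τ
    have hirr : Irreducible (cyclotomic d ℚ) := cyclotomic.irreducible_rat hdpos
    rw [hirr.coprime_iff_not_dvd]
    intro hdvdq
    have hprime : Prime (cyclotomic d ℚ) := hirr.prime
    rw [hfac] at hdvdq
    rcases hprime.dvd_or_dvd hdvdq with h1 | h2
    · have hd1 : cyclotomic d ℚ ∣ (X + 1) := hprime.dvd_of_dvd_pow h1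
      have hdeg1 : (cyclotomic d ℚ).natDegree ≤ 1 := by
        have hne : (X + 1 : ℚ[X]) ≠ 0 := by
          simpa using Polynomial.X_add_C_ne_zero (1:ℚ)
        have := Polynomial.natDegree_le_of_dvd hd1 hne
        calc (cyclotomic d ℚ).natDegree ≤ (X + 1 : ℚ[X]).natDegree := this
          _ ≤ 1 := by
            rw [← Polynomial.C_1, Polynomial.natDegree_X_add_C]
      rw [Polynomial.natDegree_cyclotomic] at hdeg1
      have htpos : 0 < d.totient := Nat.totient_pos.mpr hdpos
      have ht1 : d.totient = 1 := by omega
      rcases Nat.totient_eq_one_iff.mp ht1 with rfl | rfl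
      · exact hndvd (one_dvd _)
      · exact hndvd h2F
    · have := Polynomial.natDegree_le_of_dvd h2 hq0
      rw [Polynomial.natDegree_cyclotomic] at this
      have hbound := aux_totient_sq d
      have hdle : d ≤ 8*m^2 := by nlinarith
      exact hndvd (Nat.dvd_factorial hdpos hdle)
  set Pb : ℚ[X] := ∏ d ∈ (2*τ).divisors.filter (fun d => ¬ d ∣ F), cyclotomic d ℚ with hPb
  set Pg : ℚ[X] := ∏ d ∈ (2*τ).divisors.filter (fun d => d ∣ F), cyclotomic d ℚ with hPg
  have hcop : IsCoprime Pb hq := IsCoprime.prod_left hkey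
  obtain ⟨a, b, hab⟩ := hcop
  have hsplit : Pg * Pb = X^(2*τ) - 1 := by
    rw [hPg, hPb, Finset.prod_filter_mul_prod_filter_not,
      Polynomial.prod_cyclotomic_eq_X_pow_sub_one h2τ]
  have hPgdvd : Pg ∣ X^F - 1 := by
    rw [← Polynomial.prod_cyclotomic_eq_X_pow_sub_one hFpos]
    apply Finset.prod_dvd_prod_of_subset
    intro d hd
    rw [Finset.mem_filter, Nat.mem_divisors] at hd
    exact Nat.mem_divisors.mpr ⟨hd.2, hFpos.ne'⟩
  obtain ⟨c, hc⟩ := hPgdvd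
  refine ⟨c * a, c * Pg * b, ?_⟩
  calc X^F - 1 = Pg * c := hc
    _ = Pg * c * (a * Pb + b * hq) := by rw [hab, mul_one]
    _ = (c * a) * (Pg * Pb) + (c * Pg * b) * hq := by ring
    _ = (c * a) * (X^(2*τ) - 1) + (c * Pg * b) * hq := by rw [hsplit]

private lemma aux_col_ext {k n : ℕ} (A B : Matrix (Fin k) (Fin n) ℝ)
    (h : ∀ u, A *ᵥ Pi.single u 1 = B *ᵥ Pi.single u 1) : A = B := by
  ext i u
  have := congrFun (h u) i
  simpa using this

private lemma aux_kill {k n : ℕ} (V B : Matrix (Fin k) (Fin n) ℝ)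
    (M : Matrix (Fin n) (Fin n) ℝ) (U : Matrix (Fin k) (Fin k) ℝ)
    (hUV : U * V = (2:ℝ) • B - V)
    (hUWV : U * B = (4:ℝ) • (B * M) - (2:ℝ) • (V * M) - B)
    (w : Fin n → ℝ) (μ : ℝ) (hw : M *ᵥ w = μ • w) :
    (U * U + (2 - 4*μ) • U + 1) *ᵥ (V *ᵥ w) = 0 := by
  have ha : U *ᵥ (V *ᵥ w) = (2:ℝ) • (B *ᵥ w) - V *ᵥ w := by
    rw [Matrix.mulVec_mulVec, hUV, Matrix.sub_mulVec, Matrix.smul_mulVec]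
  have hb : U *ᵥ (B *ᵥ w) = (4*μ) • (B *ᵥ w) - (2*μ) • (V *ᵥ w) - B *ᵥ w := by
    rw [Matrix.mulVec_mulVec, hUWV, Matrix.sub_mulVec, Matrix.sub_mulVec,
      Matrix.smul_mulVec, Matrix.smul_mulVec, ← Matrix.mulVec_mulVec,
      ← Matrix.mulVec_mulVec, hw, Matrix.mulVec_smul, Matrix.mulVec_smul,
      smul_smul, smul_smul]
  have hUU : (U * U) *ᵥ (V *ᵥ w) = ((8*μ - 4) • (B *ᵥ w) + (1 - 4*μ) • (V *ᵥ w)) := by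
    rw [← Matrix.mulVec_mulVec, ha, Matrix.mulVec_sub, Matrix.mulVec_smul, hb, ha]
    module
  rw [Matrix.add_mulVec, Matrix.add_mulVec, Matrix.one_mulVec, hUU,
    Matrix.smul_mulVec, ha]
  module

private lemma aux_basis {k n : ℕ} (V : Matrix (Fin k) (Fin n) ℝ)
    (P : Matrix (Fin k) (Fin k) ℝ)
    (b : OrthonormalBasis (Fin n) ℝ (EuclideanSpace ℝ (Fin n)))
    (hb : ∀ j, P *ᵥ (V *ᵥ ⇑(b j)) = 0) : P * V = 0 := by
  have hL : ∀ y : Fin n → ℝ, (P * V) *ᵥ y = 0 := by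
    have key : (Matrix.mulVecLin (P * V)).comp
        (WithLp.linearEquiv 2 ℝ (Fin n → ℝ)).toLinearMap = 0 := by
      apply b.toBasis.ext
      intro j
      simp only [LinearMap.comp_apply, LinearEquiv.coe_toLinearMap, LinearMap.zero_apply,
        OrthonormalBasis.coe_toBasis, Matrix.mulVecLin_apply]
      rw [← Matrix.mulVec_mulVec]
      exact hb j
    intro y
    have := congrFun (congrArg (fun (L : _ →ₗ[ℝ] _) => ⇑L) key)
      ((WithLp.linearEquiv 2 ℝ (Fin n → ℝ)).symm y)
    simpa using this
  ext i j
  have := congrFun (hL (Pi.single j 1)) i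
  simpa using this

private lemma aux_quad_aeval {k : ℕ} (U : Matrix (Fin k) (Fin k) ℝ) (c : ℝ) :
    aeval U ((X+1)^2 - C (4*c) * X) = U * U + (2 - 4*c) • U + 1 := by
  simp only [map_sub, map_add, map_pow, _root_.map_mul, aeval_X, aeval_one, aeval_C,
    Algebra.algebraMap_eq_smul_one, smul_mul_assoc, Matrix.one_mul]
  have hsq : (U + 1)^2 = U * U + U + U + 1 := by
    rw [pow_two, mul_add, add_mul, add_mul, Matrix.mul_one, Matrix.one_mul, Matrix.one_mul]
    abel
  rw [hsq]
  module

private lemma aux_rat_poly {n : ℕ} (M : Matrix (Fin n) (Fin n) ℝ) (hM : M.IsHermitian)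
    (Mq : Matrix (Fin n) (Fin n) ℚ)
    (hMq : ∀ i j, (algebraMap ℚ ℝ) (Mq i j) = M i j) :
    ∃ hq : ℚ[X], hq.map (algebraMap ℚ ℝ) =
      ∏ j, ((X+1)^2 - C (4 * hM.eigenvalues j) * X) := by
  classical
  set φ : ℚ →+* ℝ := algebraMap ℚ ℝ
  set NR : Matrix (Fin n) (Fin n) ℝ[X] :=
    ((X+1)^2 : ℝ[X]) • (1 : Matrix (Fin n) (Fin n) ℝ[X]) - ((4*X : ℝ[X])) • (M.map C) with hNR
  set NQ : Matrix (Fin n) (Fin n) ℚ[X] :=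
    ((X+1)^2 : ℚ[X]) • (1 : Matrix (Fin n) (Fin n) ℚ[X]) - ((4*X : ℚ[X])) • (Mq.map C) with hNQ
  refine ⟨NQ.det, ?_⟩
  have hmap : NQ.map (Polynomial.mapRingHom φ) = NR := by
    ext i j
    by_cases h : i = j <;>
      simp [hNQ, hNR, Matrix.sub_apply, Matrix.smul_apply, Matrix.one_apply, h,
        Polynomial.map_ofNat, hMq]
  have h1 : (NQ.det).map φ = NR.det := by
    have h2 := RingHom.map_det (Polynomial.mapRingHom φ) NQ
    rw [RingHom.mapMatrix_apply, hmap, Polynomial.coe_mapRingHom] at h2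
    exact h2
  rw [h1]
  set Q : Matrix (Fin n) (Fin n) ℝ := (hM.eigenvectorUnitary : Matrix (Fin n) (Fin n) ℝ) with hQdef
  have hQ1 : Q * star Q = 1 := (Matrix.mem_unitaryGroup_iff).mp hM.eigenvectorUnitary.2
  have hQ2 : star Q * Q = 1 := (Matrix.mem_unitaryGroup_iff').mp hM.eigenvectorUnitary.2
  have hspec : M = Q * diagonal hM.eigenvalues * star Q := by
    have := hM.spectral_theorem
    rw [Unitary.conjStarAlgAut_apply] at this
    exact this
  set Qc : Matrix (Fin n) (Fin n) ℝ[X] := Q.map C with hQc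
  set Qs : Matrix (Fin n) (Fin n) ℝ[X] := (star Q).map C with hQs
  have hQcs : Qc * Qs = 1 := by
    rw [hQc, hQs, ← Matrix.map_mul, hQ1]
    simp
  set D : Matrix (Fin n) (Fin n) ℝ[X] :=
    Matrix.diagonal (fun j => ((X+1)^2 - (4*X) * C (hM.eigenvalues j) : ℝ[X])) with hD
  have hfact : Qc * D * Qs = NR := by
    have hDalt : D = ((X+1)^2 : ℝ[X]) • (1 : Matrix (Fin n) (Fin n) ℝ[X])
        - ((4*X : ℝ[X])) • ((diagonal hM.eigenvalues).map C) := by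
      ext i j
      by_cases h : i = j <;>
        simp [hD, Matrix.sub_apply, Matrix.smul_apply, Matrix.one_apply, h,
          Matrix.diagonal_apply, Matrix.map_apply]
    rw [hDalt, Matrix.mul_sub, Matrix.sub_mul, hNR]
    congr 1
    · rw [Matrix.mul_smul, Matrix.mul_one, Matrix.smul_mul, hQcs]
    · have key : M.map (⇑(C : ℝ →+* ℝ[X])) = Qc * ((diagonal hM.eigenvalues).map ⇑C) * Qs := by
        conv_lhs => rw [hspec, Matrix.map_mul, Matrix.map_mul]
      rw [Matrix.mul_smul, Matrix.smul_mul, key, Matrix.mul_assoc]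
  rw [← hfact, Matrix.det_mul, Matrix.det_mul]
  have hdets : Qc.det * D.det * Qs.det = (Qc.det * Qs.det) * D.det := by ring
  rw [hdets, ← Matrix.det_mul, hQcs, Matrix.det_one, one_mul]
  rw [hD, Matrix.det_diagonal]
  apply Finset.prod_congr rfl
  intro j _
  have : (C (4 * hM.eigenvalues j) : ℝ[X]) = 4 * C (hM.eigenvalues j) := by
    rw [Polynomial.C_mul, map_ofNat]
  rw [this]
  ring

theorem stmt_14 (k n f : ℕ) (hk : 0 < k) (hn : 0 < n) (hf : 0 < f)
    (V : Matrix (Fin k) (Fin n) ℝ) (W : Matrix (Fin k) (Fin f) ℝ)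
    (hV : Vᵀ * V = 1) (hW : Wᵀ * W = 1)
    (U : Matrix (Fin k) (Fin k) ℝ)
    (hU : U = (2 • (W * Wᵀ) - 1) * (2 • (V * Vᵀ) - 1))
    (hrat : ∀ i j : Fin n, ∃ q : ℚ, (Vᵀ * W * Wᵀ * V) i j = (q : ℝ))
    (π : Fin n → Fin n) (hinv : ∀ u, π (π u) = u) (hfpf : ∀ u, π u ≠ u)
    (τ : ℕ) (hτpos : 0 < τ)
    (hPST : ∀ u : Fin n,
      (U ^ τ) *ᵥ (V *ᵥ Pi.single u 1) = V *ᵥ Pi.single (π u) 1)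
    (hleast : ∀ t : ℕ, 0 < t →
      (∀ u : Fin n, (U ^ t) *ᵥ (V *ᵥ Pi.single u 1) = V *ᵥ Pi.single (π u) 1) →
      τ ≤ t) :
    (τ : ℝ) ≤ (1 / 2 : ℝ) * (Nat.factorial (8 * (min n f) ^ 2)) := by
  classical
  set m : ℕ := min n f with hmdef
  have hm : 0 < m := lt_min hn hf
  set F : ℕ := (8*m^2).factorial with hFdef
  have hFpos : 0 < F := Nat.factorial_pos _
  set M : Matrix (Fin n) (Fin n) ℝ := Vᵀ * W * Wᵀ * V with hMdef
  -- basic matrix identities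
  have hps : (2 • (V * Vᵀ) - 1) * V = V := by
    rw [Matrix.sub_mul, Matrix.smul_mul, Matrix.one_mul, Matrix.mul_assoc, hV,
      Matrix.mul_one, two_smul]
    abel
  have hUV : U * V = 2 • (W * Wᵀ * V) - V := by
    rw [hU, Matrix.mul_assoc, hps, Matrix.sub_mul, Matrix.smul_mul, Matrix.one_mul,
      Matrix.mul_assoc]
  have hUWV : U * (W * Wᵀ * V) = 4 • ((W * Wᵀ * V) * M) - 2 • (V * M) - (W * Wᵀ * V) := by
    have h1 : (2 • (V * Vᵀ) - 1) * (W * Wᵀ * V) = 2 • (V * M) - W * Wᵀ * V := by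
      rw [Matrix.sub_mul, Matrix.smul_mul, Matrix.one_mul, hMdef]
      congr 2
      simp [Matrix.mul_assoc]
    have h2 : Wᵀ * (W * (Wᵀ * V)) = Wᵀ * V := by
      rw [← Matrix.mul_assoc Wᵀ W, hW, Matrix.one_mul]
    rw [hU, Matrix.mul_assoc, h1, Matrix.mul_sub, Matrix.sub_mul, Matrix.sub_mul,
      Matrix.smul_mul, Matrix.smul_mul, Matrix.one_mul, Matrix.one_mul, Matrix.mul_smul,
      smul_smul]
    simp only [Matrix.mul_assoc, h2]
    norm_num
    abel
  have hM : M.IsHermitian := by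
    rw [Matrix.IsHermitian, conjTranspose_eq_transpose_of_trivial, hMdef]
    simp [Matrix.transpose_mul, Matrix.mul_assoc]
  -- real-scalar versions
  have hsm2 : (2 : ℕ) • (W * Wᵀ * V) = (2:ℝ) • (W * Wᵀ * V) := by
    rw [← Nat.cast_smul_eq_nsmul ℝ]; norm_num
  have hsm2' : (2 : ℕ) • (V * M) = (2:ℝ) • (V * M) := by
    rw [← Nat.cast_smul_eq_nsmul ℝ]; norm_num
  have hsm4 : (4 : ℕ) • ((W * Wᵀ * V) * M) = (4:ℝ) • ((W * Wᵀ * V) * M) := by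
    rw [← Nat.cast_smul_eq_nsmul ℝ]; norm_num
  have hUV' : U * V = (2:ℝ) • (W * Wᵀ * V) - V := by rw [hUV, hsm2]
  have hUWV' : U * (W * Wᵀ * V) =
      (4:ℝ) • ((W * Wᵀ * V) * M) - (2:ℝ) • (V * M) - (W * Wᵀ * V) := by
    rw [hUWV, hsm2', hsm4]
  -- eigenvalues
  set lam : Fin n → ℝ := hM.eigenvalues with hlam
  set Hr : ℝ[X] := ∏ j, ((X+1)^2 - C (4 * lam j) * X) with hHr
  -- annihilation : aeval U Hr * V = 0
  have hann : (aeval U Hr) * V = 0 := by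
    apply aux_basis V _ hM.eigenvectorBasis
    intro j
    have hw : M *ᵥ ⇑(hM.eigenvectorBasis j) = lam j • ⇑(hM.eigenvectorBasis j) :=
      hM.mulVec_eigenvectorBasis j
    have hj : (aeval U ((X+1)^2 - C (4 * lam j) * X)) *ᵥ (V *ᵥ ⇑(hM.eigenvectorBasis j)) = 0 := by
      rw [aux_quad_aeval]
      exact aux_kill V (W * Wᵀ * V) M U hUV' hUWV' _ _ hw
    rw [hHr, ← Finset.prod_erase_mul Finset.univ _ (Finset.mem_univ j), _root_.map_mul,
      ← Matrix.mulVec_mulVec, hj, Matrix.mulVec_zero]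
  -- rationality
  set φ : ℚ →+* ℝ := algebraMap ℚ ℝ with hφ
  have hφinj : Function.Injective φ := φ.injective
  set Mq : Matrix (Fin n) (Fin n) ℚ := fun i j => (hrat i j).choose with hMqdef
  have hMq : ∀ i j, φ (Mq i j) = M i j := by
    intro i j
    rw [hφ, eq_ratCast]
    exact ((hrat i j).choose_spec).symm
  obtain ⟨hq, hqmap⟩ := aux_rat_poly M hM Mq hMq
  rw [← hlam, ← hHr] at hqmap
  -- degree bookkeeping
  have hform : ∀ c : ℝ, ((X+1)^2 - C (4*c) * X : ℝ[X]) = X^2 + (C (2-4*c) * X + C 1) := by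
    intro c
    have h1 : (C (2 - 4*c) : ℝ[X]) = C 2 - C (4*c) := by rw [map_sub]
    have h2 : (C 2 : ℝ[X]) = 2 := map_ofNat C 2
    rw [h1, h2, Polynomial.C_1]
    ring
  have hfm : ∀ j, Monic ((X+1)^2 - C (4 * lam j) * X : ℝ[X]) := by
    intro j
    rw [hform]
    apply monic_X_pow_add
    refine lt_of_le_of_lt degree_linear_le ?_
    exact_mod_cast one_lt_two
  have hfd : ∀ j, ((X+1)^2 - C (4 * lam j) * X : ℝ[X]).natDegree = 2 := by
    intro j
    rw [hform]
    have hside : (C (2-4*lam j) * X + C 1 : ℝ[X]).degree < ((X:ℝ[X])^2).degree := by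
      rw [degree_X_pow]
      refine lt_of_le_of_lt degree_linear_le ?_
      exact_mod_cast one_lt_two
    have : ((X:ℝ[X])^2 + (C (2-4*lam j) * X + C 1)).degree = 2 := by
      rw [degree_add_eq_left_of_degree_lt hside, degree_X_pow]
      norm_num
    exact natDegree_eq_of_degree_eq_some this
  have hHrMonic : Hr.Monic := monic_prod_of_monic _ _ (fun j _ => hfm j)
  have hHrdeg : Hr.natDegree = 2 * n := by
    rw [hHr, natDegree_prod_of_monic _ _ (fun j _ => hfm j)]
    rw [Finset.sum_congr rfl (fun j _ => hfd j), Finset.sum_const, Finset.card_univ,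
      Fintype.card_fin, smul_eq_mul, mul_comm]
  have hqne : hq ≠ 0 := by
    intro h
    rw [h, Polynomial.map_zero] at hqmap
    exact hHrMonic.ne_zero hqmap.symm
  have hqdeg : hq.natDegree = 2 * n := by
    rw [← hHrdeg, ← hqmap, Polynomial.natDegree_map]
  -- rank bound
  have hrank : M.rank = Fintype.card {j // lam j ≠ 0} := hM.rank_eq_card_non_zero_eigs
  have hrankm : M.rank ≤ m := by
    have hMfac : M = (Vᵀ * W) * (Wᵀ * V) := by
      rw [hMdef, Matrix.mul_assoc]
    have h1 : M.rank ≤ (Vᵀ * W).rank := by rw [hMfac]; exact Matrix.rank_mul_le_left _ _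
    have h2 : (Vᵀ * W).rank ≤ f := by
      have := Matrix.rank_le_card_width (Vᵀ * W)
      simpa using this
    have h3 : (Vᵀ * W).rank ≤ n := by
      have := Matrix.rank_le_card_height (Vᵀ * W)
      simpa using this
    rw [hmdef]
    exact le_min (le_trans h1 h3) (le_trans h1 h2)
  -- divisibility by (X+1) powers
  set r : ℕ := M.rank with hrdef
  have hdvdHr : ((X + 1 : ℝ[X]))^(2*(n - r)) ∣ Hr := by
    have hcard : (Finset.univ.filter (fun j => lam j = 0)).card = n - r := by
      have h1 := Finset.card_filter_add_card_filter_not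
        (s := (Finset.univ : Finset (Fin n))) (p := fun j => lam j ≠ 0)
      have h2 : r = (Finset.univ.filter (fun j => lam j ≠ 0)).card := by
        rw [hrank]
        exact Fintype.card_subtype _
      have h3 : (Finset.univ.filter (fun j => ¬ lam j ≠ 0)).card =
          (Finset.univ.filter (fun j => lam j = 0)).card := by
        congr 1
        apply Finset.filter_congr
        intro j _
        simp
      simp only [Finset.card_univ, Fintype.card_fin] at h1
      omega
    have hsub : Hr = (∏ j ∈ Finset.univ.filter (fun j => lam j = 0),
        ((X+1)^2 - C (4 * lam j) * X)) * (∏ j ∈ Finset.univ.filter (fun j => ¬ lam j = 0),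
        ((X+1)^2 - C (4 * lam j) * X)) := by
      rw [hHr, Finset.prod_filter_mul_prod_filter_not]
    have hz : ∏ j ∈ Finset.univ.filter (fun j => lam j = 0),
        ((X+1)^2 - C (4 * lam j) * X) = ((X + 1 : ℝ[X]))^(2*(n - r)) := by
      calc ∏ j ∈ Finset.univ.filter (fun j => lam j = 0), ((X+1)^2 - C (4 * lam j) * X)
          = ∏ _j ∈ Finset.univ.filter (fun j => lam j = 0), ((X + 1 : ℝ[X]))^2 := by
            apply Finset.prod_congr rfl
            intro j hj
            rw [Finset.mem_filter] at hj
            rw [hj.2]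
            simp
        _ = (((X + 1 : ℝ[X]))^2)^((Finset.univ.filter (fun j => lam j = 0)).card) :=
            Finset.prod_const _
        _ = ((X + 1 : ℝ[X]))^(2*(n - r)) := by rw [hcard]; exact (pow_mul _ 2 (n-r)).symm
    rw [hsub, hz]
    exact Dvd.intro _ rfl
  have hXmono : ((X + 1 : ℚ[X])).Monic := by
    simpa using monic_X_add_C (1:ℚ)
  have hdvdq : ((X + 1 : ℚ[X]))^(2*(n - r)) ∣ hq := by
    apply (Polynomial.map_dvd_map φ hφinj (hXmono.pow _)).mp
    have hmapXp : (((X + 1 : ℚ[X]))^(2*(n - r))).map φ = ((X + 1 : ℝ[X]))^(2*(n - r)) := by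
      simp
    rw [hmapXp, hqmap]
    exact hdvdHr
  -- extract the (X+1) factor
  set e : ℕ := Polynomial.rootMultiplicity (-1) hq with hedef
  have hXC : (X - C (-1) : ℚ[X]) = X + 1 := by simp
  have he : 2*(n - r) ≤ e := by
    rw [hedef]
    apply (Polynomial.le_rootMultiplicity_iff hqne).mpr
    rw [hXC]
    exact hdvdq
  have hpowdvd := Polynomial.pow_rootMultiplicity_dvd hq (-1)
  rw [hXC, ← hedef] at hpowdvd
  obtain ⟨q0, hfac⟩ := hpowdvd
  have hq0ne : q0 ≠ 0 := by
    intro h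
    rw [h, mul_zero] at hfac
    exact hqne hfac
  have hXdeg : ((X + 1 : ℚ[X])).natDegree = 1 := by
    simpa using Polynomial.natDegree_X_add_C (1:ℚ)
  have hdegsum : e + q0.natDegree = 2 * n := by
    have h1 : hq.natDegree = ((X + 1 : ℚ[X])^e).natDegree + q0.natDegree := by
      rw [hfac]
      exact Polynomial.natDegree_mul (pow_ne_zero _ (hXmono.ne_zero)) hq0ne
    rw [hqdeg, Polynomial.natDegree_pow, hXdeg, mul_one] at h1
    omega
  have hq0deg : q0.natDegree ≤ 2 * m := by omega
  -- the key polynomial identity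
  obtain ⟨A, B, hAB⟩ := aux_cyclo m τ hτpos hm hq q0 e hfac hq0ne hq0deg
  -- matrix consequences
  set ψ : ℚ[X] →+* ℝ[X] := Polynomial.mapRingHom φ with hψdef
  have hψq : ψ hq = Hr := by
    rw [hψdef, Polynomial.coe_mapRingHom]
    exact hqmap
  have hGood2τ : U^(2*τ) * V = V := by
    apply aux_col_ext
    intro u
    rw [← Matrix.mulVec_mulVec, two_mul, pow_add, ← Matrix.mulVec_mulVec,
      hPST u, hPST (π u), hinv u]
  have haev1 : aeval U (ψ ((X:ℚ[X])^(2*τ) - 1)) * V = 0 := by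
    have hψ1 : ψ ((X:ℚ[X])^(2*τ) - 1) = (X:ℝ[X])^(2*τ) - 1 := by
      simp [hψdef]
    rw [hψ1, map_sub, map_pow, aeval_X, aeval_one, Matrix.sub_mul, Matrix.one_mul,
      hGood2τ, sub_self]
  have haev2 : aeval U (ψ hq) * V = 0 := by
    rw [hψq]
    exact hann
  have hGoodF : U^F * V = V := by
    have h5 : aeval U (ψ ((X:ℚ[X])^F - 1)) * V = 0 := by
      rw [hAB, map_add, _root_.map_mul, _root_.map_mul, map_add, _root_.map_mul,
        _root_.map_mul, Matrix.add_mul, Matrix.mul_assoc, Matrix.mul_assoc,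
        haev1, haev2, Matrix.mul_zero, Matrix.mul_zero, add_zero]
    have hψF : ψ ((X:ℚ[X])^F - 1) = (X:ℝ[X])^F - 1 := by
      simp [hψdef]
    rw [hψF, map_sub, map_pow, aeval_X, aeval_one, Matrix.sub_mul, Matrix.one_mul] at h5
    have := sub_eq_zero.mp h5
    exact this
  -- gcd argument
  set G : ℕ := Nat.gcd (2*τ) F with hGdef
  have hGpos : 0 < G := Nat.gcd_pos_of_pos_right _ hFpos
  have hGoodG : U^G * V = V := by
    apply aux_gcd_closed (P := fun t => U^t * V = V)
    · simp
    · intro a b ha hb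
      rw [pow_add, Matrix.mul_assoc, hb, ha]
    · intro a b hab ha
      have hcomm : U^(a+b) = U^b * U^a := by
        rw [add_comm, pow_add]
      rw [hcomm, Matrix.mul_assoc, ha] at hab
      exact hab
    · exact hGood2τ
    · exact hGoodF
  have hτleG : τ ≤ G := by
    by_contra hlt
    push_neg at hlt
    have hPSTG : ∀ u, (U^(τ - G)) *ᵥ (V *ᵥ Pi.single u 1) = V *ᵥ Pi.single (π u) 1 := by
      intro u
      have hVG : V *ᵥ Pi.single u 1 = (U^G * V) *ᵥ Pi.single u 1 := by rw [hGoodG]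
      rw [hVG, ← Matrix.mulVec_mulVec, Matrix.mulVec_mulVec, ← pow_add]
      have hτG : τ - G + G = τ := by omega
      rw [hτG]
      exact hPST u
    have := hleast (τ - G) (by omega) hPSTG
    omega
  obtain ⟨c, hc⟩ := Nat.gcd_dvd_left (2*τ) F
  rw [← hGdef] at hc
  have hcle : c ≤ 2 := by
    by_contra hc3
    push_neg at hc3
    have : G * 3 ≤ G * c := Nat.mul_le_mul_left _ hc3
    omega
  have hcpos : 0 < c := by
    rcases Nat.eq_zero_or_pos c with rfl | h
    · omega
    · exact h
  interval_cases c
  · -- c = 1 : 2τ = G divides F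
    have h2τF : 2*τ ∣ F := by
      rw [hc, mul_one]
      exact Nat.gcd_dvd_right _ _
    have h2τleF : 2*τ ≤ F := Nat.le_of_dvd hFpos h2τF
    have : (2*τ : ℝ) ≤ (F : ℝ) := by exact_mod_cast h2τleF
    push_cast at this ⊢
    linarith
  · -- c = 2 : τ = G, contradiction with fixed-point-freeness
    exfalso
    have hτG : τ = G := by omega
    have hGoodτ : U^τ * V = V := by rw [hτG]; exact hGoodG
    set u : Fin n := ⟨0, hn⟩ with hu
    have h1 : V *ᵥ Pi.single (π u) 1 = V *ᵥ Pi.single u 1 := by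
      rw [← hPST u, Matrix.mulVec_mulVec, hGoodτ]
    have h2 : (Pi.single (π u) 1 : Fin n → ℝ) = Pi.single u 1 := by
      have h3 : Vᵀ *ᵥ (V *ᵥ Pi.single (π u) 1) = Vᵀ *ᵥ (V *ᵥ Pi.single u 1) := by
        rw [h1]
      rw [Matrix.mulVec_mulVec, Matrix.mulVec_mulVec, hV, Matrix.one_mulVec,
        Matrix.one_mulVec] at h3
      exact h3
    have h4 := congrFun h2 u
    rw [Pi.single_eq_same] at h4
    have h5 : (Pi.single (π u) 1 : Fin n → ℝ) u = 0 := by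
      rw [Pi.single_apply, if_neg (fun h => hfpf u h.symm)]
    rw [h5] at h4
    exact zero_ne_one h4
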